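/- Let β_1,…,β_n be a distinguished T-action datum in V, let 1 ≤ j < k ≤ n and f_{j+1},…,f_{k−1} ∈ ℂ, and let f ∈ ℂ^n be the vector with f_j = f_k = −1, entries f_{j+1},…,f_{k−1} at positions j+1,…,k−1, and all other entries 0. Define η_j = γ_j and η_l = s_{γ_l}(η_{l−1}) − f_l γ_l for l = j+1,…,k−1; each η_l lies in the span of the distinct values of γ, and for such an element η and γ among the distinct values, [η:γ] denotes the coefficient of γ in the unique expansion of η in the distinct values of γ. If Σ_{l=1}^n f_l β_l = 0, then [η_l:γ_l] = 0 for every l ∈ [j,k−1] with l⁺ > k, and f = Σ_{l=j}^{k−1} [η_l:γ_l] θ^{(l)}. -/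

import Mathlib

open Finset Matrix

noncomputable section

/-- The standard embedding of an integer vector into `ℂⁿ`. -/
def cvec {n : ℕ} (w : Fin n → ℤ) : Fin n → ℂ := fun j => (w j : ℂ)

/-- `J_w = { j : w_j = -1 }`. -/
def Jset {n : ℕ} (w : Fin n → ℤ) : Finset (Fin n) :=
  Finset.univ.filter (fun j => w j = -1)

/-- The linear map `β : ℂⁿ → V`, `w ↦ ∑ w_j β_j`. -/
def bmap {n : ℕ} {V : Type*} [AddCommGroup V] [Module ℂ V]
    (β : Fin n → V) (w : Fin n → ℂ) : V :=
  ∑ j, w j • β j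

/-- The pair `(λ, β)` is T-log-symplectic. -/
def TLogSymp {n : ℕ} {V : Type*} [AddCommGroup V] [Module ℂ V]
    (M : Matrix (Fin n) (Fin n) ℂ) (β : Fin n → V) : Prop :=
  ∀ w : Fin n → ℂ, M.mulVec w = 0 → bmap β w = 0 → w = 0

/-- The set `W(λ, β)`. -/
def Wset {n : ℕ} {V : Type*} [AddCommGroup V] [Module ℂ V]
    (M : Matrix (Fin n) (Fin n) ℂ) (β : Fin n → V) : Set (Fin n → ℤ) :=
  {w | (∀ j, -1 ≤ w j) ∧ (∀ j, j ∉ Jset w → M.mulVec (cvec w) j = 0) ∧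
    bmap β (cvec w) = 0}

/-- The set `S(λ, β)` of smoothable weights. -/
def Sset {n : ℕ} {V : Type*} [AddCommGroup V] [Module ℂ V]
    (M : Matrix (Fin n) (Fin n) ℂ) (β : Fin n → V) : Set (Fin n → ℤ) :=
  {θ | θ ∈ Wset M β ∧ (Jset θ).card = 2}

/-- `S_m`: sums of exactly `m` elements of `S`, repetitions allowed. -/
def SumOf {n : ℕ} (S : Set (Fin n → ℤ)) (m : ℕ) : Set (Fin n → ℤ) :=
  {w | ∃ l : Multiset (Fin n → ℤ), (∀ x ∈ l, x ∈ S) ∧ Multiset.card l = m ∧ l.sum = w}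

/-- `S_{≥ m}`: sums of at least `m` elements of `S`, repetitions allowed. -/
def SumGE {n : ℕ} (S : Set (Fin n → ℤ)) (m : ℕ) : Set (Fin n → ℤ) :=
  {w | ∃ m', m ≤ m' ∧ w ∈ SumOf S m'}

/-- A vector `w ∈ ℤⁿ` is negatively bordered. -/
def NegBordered {n : ℕ} (w : Fin n → ℤ) : Prop :=
  ∃ j k : Fin n, j < k ∧ w j = -1 ∧ w k = -1 ∧ (∀ i, i < j → w i = 0) ∧
    (∀ i, k < i → w i = 0) ∧ (∀ i, j < i → i < k → 0 ≤ w i)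

/-- The Cartan number `a_{b,ξ} = 2⟨b,ξ⟩/⟨b,b⟩`. -/
def cartan {V : Type*} [AddCommGroup V] [Module ℂ V]
    (B : V →ₗ[ℂ] V →ₗ[ℂ] ℂ) (b ξ : V) : ℂ :=
  2 * B b ξ / B b b

/-- The reflection `s_b(ξ) = ξ - a_{b,ξ} b`. -/
def sRefl {V : Type*} [AddCommGroup V] [Module ℂ V]
    (B : V →ₗ[ℂ] V →ₗ[ℂ] ℂ) (b ξ : V) : V :=
  ξ - cartan B b ξ • b

/-- `reflL B g m = s_{g 0} ∘ s_{g 1} ∘ ⋯ ∘ s_{g (m-1)}`. -/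
def reflL {V : Type*} [AddCommGroup V] [Module ℂ V]
    (B : V →ₗ[ℂ] V →ₗ[ℂ] ℂ) (g : ℕ → V) : ℕ → V → V
  | 0, ξ => ξ
  | m + 1, ξ => reflL B g m (sRefl B (g m) ξ)

/-- `reflR B g m = s_{g (m-1)} ∘ ⋯ ∘ s_{g 1} ∘ s_{g 0}`. -/
def reflR {V : Type*} [AddCommGroup V] [Module ℂ V]
    (B : V →ₗ[ℂ] V →ₗ[ℂ] ℂ) (g : ℕ → V) : ℕ → V → V
  | 0, ξ => ξ
  | m + 1, ξ => sRefl B (g m) (reflR B g m ξ)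

/-- Extension of a `Fin n`-indexed family to `ℕ` by zero. -/
def gext {n : ℕ} {V : Type*} [AddCommGroup V] (v : Fin n → V) : ℕ → V :=
  fun t => if h : t < n then v ⟨t, h⟩ else 0

/-- `γ_j = s_{β_1} s_{β_2} ⋯ s_{β_{j-1}} (β_j)`. -/
def gam {n : ℕ} {V : Type*} [AddCommGroup V] [Module ℂ V]
    (B : V →ₗ[ℂ] V →ₗ[ℂ] ℂ) (β : Fin n → V) (j : Fin n) : V :=
  reflL B (gext β) j.val (β j)

/-- The Poisson coefficient matrix `λ` of a T-action datum: `λ_{jk} = -⟨β_j, β_k⟩` for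
`j < k`, `⟨β_j, β_k⟩` for `j > k`, and `0` on the diagonal. -/
def lam {n : ℕ} {V : Type*} [AddCommGroup V] [Module ℂ V]
    (B : V →ₗ[ℂ] V →ₗ[ℂ] ℂ) (β : Fin n → V) : Matrix (Fin n) (Fin n) ℂ :=
  Matrix.of fun j k =>
    if j < k then -(B (β j) (β k)) else if k < j then B (β j) (β k) else 0

/-- The upper triangular matrix `Q` with `Q_{jj} = 1` and `Q_{jk} = a_{γ_j, γ_k}` for
`j < k`. -/
def Qmat {n : ℕ} {V : Type*} [AddCommGroup V] [Module ℂ V]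
    (B : V →ₗ[ℂ] V →ₗ[ℂ] ℂ) (γ : Fin n → V) : Matrix (Fin n) (Fin n) ℂ :=
  Matrix.of fun j k => if j = k then 1 else if j < k then cartan B (γ j) (γ k) else 0

open scoped Classical in
/-- The set `{k ∈ [j+1, n] : γ_k = γ_j}`, whose minimum (when it exists) is `j⁺`. -/
def plusSet {n : ℕ} {V : Type*} (γ : Fin n → V) (j : Fin n) : Finset (Fin n) :=
  Finset.univ.filter (fun k => j < k ∧ γ k = γ j)

/-- `e_{j⁺} ∈ ℂⁿ`, with the convention `e_{+∞} = 0`. -/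
def eplus {n : ℕ} {V : Type*} (γ : Fin n → V) (j : Fin n) : Fin n → ℂ :=
  if h : (plusSet γ j).Nonempty then Pi.single ((plusSet γ j).min' h) 1 else 0

/-- `θ^{(j)} = Q (e_j - e_{j⁺}) ∈ ℂⁿ`. -/
def thetaC {n : ℕ} {V : Type*} [AddCommGroup V] [Module ℂ V]
    (B : V →ₗ[ℂ] V →ₗ[ℂ] ℂ) (β : Fin n → V) (j : Fin n) : Fin n → ℂ :=
  (Qmat B (gam B β)).mulVec ((Pi.single j 1 : Fin n → ℂ) - eplus (gam B β) j)

/-- The linear map `β : ℂⁿ → V`, `w ↦ ∑ w_j β_j`, as a bundled linear map. -/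
def betaLin {n : ℕ} {V : Type*} [AddCommGroup V] [Module ℂ V]
    (β : Fin n → V) : (Fin n → ℂ) →ₗ[ℂ] V where
  toFun w := ∑ j, w j • β j
  map_add' x y := by simp [add_smul, Finset.sum_add_distrib]
  map_smul' a x := by simp [Finset.smul_sum, smul_smul]

section ReflLemmas

variable {V : Type*} [AddCommGroup V] [Module ℂ V] (B : V →ₗ[ℂ] V →ₗ[ℂ] ℂ)

lemma sRefl_def (b ξ : V) : sRefl B b ξ = ξ - (2 * B b ξ / B b b) • b := rfl

lemma sRefl_add (b x y : V) : sRefl B b (x + y) = sRefl B b x + sRefl B b y := by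
  simp only [sRefl_def, map_add]
  rw [show 2 * (B b x + B b y) / B b b = 2 * B b x / B b b + 2 * B b y / B b b by ring]
  rw [add_smul]; abel

lemma sRefl_smul (b : V) (c : ℂ) (x : V) : sRefl B b (c • x) = c • sRefl B b x := by
  simp only [sRefl_def, _root_.map_smul, smul_eq_mul, smul_sub, smul_smul]
  rw [show 2 * (c * B b x) / B b b = c * (2 * B b x / B b b) by ring]

lemma sRefl_zero (b : V) : sRefl B b 0 = 0 := by
  simp [sRefl_def]

lemma sRefl_sub (b x y : V) : sRefl B b (x - y) = sRefl B b x - sRefl B b y := by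
  have h := sRefl_add B b y (x - y)
  rw [add_sub_cancel] at h
  rw [h]; abel

lemma sRefl_sum {ι : Type*} (b : V) (s : Finset ι) (ξ : ι → V) :
    sRefl B b (∑ i ∈ s, ξ i) = ∑ i ∈ s, sRefl B b (ξ i) := by
  classical
  induction s using Finset.induction with
  | empty => simp [sRefl_zero]
  | insert _ _ h ih => rw [Finset.sum_insert h, Finset.sum_insert h, sRefl_add, ih]

variable (hB : ∀ x y, B x y = B y x)
include hB

lemma sRefl_B (b x y : V) : B (sRefl B b x) (sRefl B b y) = B x y := by
  simp only [sRefl_def, map_sub, _root_.map_smul, smul_eq_mul, LinearMap.sub_apply,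
    LinearMap.smul_apply]
  by_cases h : B b b = 0
  · simp [h, hB b x, hB b y]
  · field_simp
    rw [hB x b, hB b y]
    ring

lemma sRefl_sRefl (b ξ : V) : sRefl B b (sRefl B b ξ) = ξ := by
  by_cases h : B b b = 0
  · simp [sRefl_def, h]
  · rw [sRefl_def B b ξ, sRefl_sub, sRefl_smul]
    simp only [sRefl_def]
    rw [show (2 * B b b / B b b : ℂ) = 2 by field_simp]
    module

lemma sRefl_comm (c b ξ : V) :
    sRefl B c (sRefl B b ξ) = sRefl B (sRefl B c b) (sRefl B c ξ) := by
  conv_lhs => rw [sRefl_def B b ξ]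
  rw [sRefl_sub, sRefl_smul]
  conv_rhs => rw [sRefl_def B (sRefl B c b), sRefl_B B hB c b ξ, sRefl_B B hB c b b]

end ReflLemmas
section WordLemmas

variable {V : Type*} [AddCommGroup V] [Module ℂ V] (B : V →ₗ[ℂ] V →ₗ[ℂ] ℂ)

lemma reflL_add (g : ℕ → V) (m : ℕ) (x y : V) :
    reflL B g m (x + y) = reflL B g m x + reflL B g m y := by
  induction m generalizing x y with
  | zero => rfl
  | succ m ih => rw [reflL, reflL, reflL, sRefl_add, ih]

lemma reflL_smul (g : ℕ → V) (m : ℕ) (c : ℂ) (x : V) :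
    reflL B g m (c • x) = c • reflL B g m x := by
  induction m generalizing x with
  | zero => rfl
  | succ m ih => rw [reflL, reflL, sRefl_smul, ih]

lemma reflL_congr (g g' : ℕ → V) (m : ℕ) (h : ∀ i < m, g i = g' i) (ξ : V) :
    reflL B g m ξ = reflL B g' m ξ := by
  induction m generalizing ξ with
  | zero => rfl
  | succ m ih =>
      rw [reflL, reflL, h m (Nat.lt_succ_self m), ih]
      intro i hi; exact h i (hi.trans (Nat.lt_succ_self m))

variable (hB : ∀ x y, B x y = B y x)
include hB

lemma reflL_B (g : ℕ → V) (m : ℕ) (x y : V) :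
    B (reflL B g m x) (reflL B g m y) = B x y := by
  induction m generalizing x y with
  | zero => rfl
  | succ m ih => rw [reflL, reflL, ih, sRefl_B B hB]

lemma reflL_reflR (g : ℕ → V) (m : ℕ) (ξ : V) :
    reflL B g m (reflR B g m ξ) = ξ := by
  induction m generalizing ξ with
  | zero => rfl
  | succ m ih => rw [reflL, reflR, sRefl_sRefl B hB, ih]

lemma reflR_reflL (g : ℕ → V) (m : ℕ) (ξ : V) :
    reflR B g m (reflL B g m ξ) = ξ := by
  induction m generalizing ξ with
  | zero => rfl
  | succ m ih => rw [reflL, reflR, ih, sRefl_sRefl B hB]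

lemma reflR_sRefl (g : ℕ → V) (m : ℕ) (b ξ : V) :
    reflR B g m (sRefl B b ξ) = sRefl B (reflR B g m b) (reflR B g m ξ) := by
  induction m with
  | zero => rfl
  | succ m ih => rw [reflR, reflR, reflR, ih, sRefl_comm B hB]

omit hB

lemma reflL_peel (g : ℕ → V) (m : ℕ) (ξ : V) :
    reflL B g (m + 1) ξ = sRefl B (g 0) (reflL B (fun i => g (i + 1)) m ξ) := by
  induction m generalizing ξ with
  | zero => rfl
  | succ m ih =>
      rw [reflL, ih]
      rfl

include hB

/-- Cancellation: `reflR g m ∘ reflL g t = reflL (shift g m) (t - m)` for `m ≤ t`. -/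
lemma reflR_reflL_shift (g : ℕ → V) (m t : ℕ) (hmt : m ≤ t) (ξ : V) :
    reflR B g m (reflL B g t ξ) = reflL B (fun i => g (i + m)) (t - m) ξ := by
  induction m with
  | zero => simp only [Nat.sub_zero]; rw [reflR]; exact reflL_congr B _ _ t (by simp) ξ
  | succ m ih =>
      rw [reflR, ih (Nat.le_of_succ_le hmt)]
      obtain ⟨d, hd⟩ : ∃ d, t - m = d + 1 := ⟨t - m - 1, by omega⟩
      rw [hd, reflL_peel]
      simp only [Nat.zero_add]
      rw [sRefl_sRefl B hB, show t - (m+1) = d by omega]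
      exact reflL_congr B _ _ d
        (fun i _ => by show g (i+1+m) = g (i+(m+1)); congr 1; omega) ξ

end WordLemmas
section GamLemmas

variable {n : ℕ} {V : Type*} [AddCommGroup V] [Module ℂ V] (B : V →ₗ[ℂ] V →ₗ[ℂ] ℂ)
variable (hB : ∀ x y, B x y = B y x) (β : Fin n → V)
include hB

/-- `s_{β_1}⋯s_{β_t} = s_{γ_t}⋯s_{γ_1}` as maps. -/
lemma reflL_beta_eq_reflR_gam : ∀ t, t ≤ n → ∀ ξ : V,
    reflL B (gext β) t ξ = reflR B (gext (gam B β)) t ξ := by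
  intro t
  induction t with
  | zero => intro _ _; rfl
  | succ t ih =>
      intro ht ξ
      have ht' : t < n := ht
      rw [reflL, reflR]
      have hγ : gext (gam B β) t = reflR B (gext (gam B β)) t (gext β t) := by
        rw [← ih (le_of_lt ht') (gext β t)]
        simp only [gext, dif_pos ht']
        rfl
      rw [ih (le_of_lt ht') (sRefl B (gext β t) ξ), reflR_sRefl B hB, ← hγ]

lemma gam_eq_reflR (t : Fin n) :
    gam B β t = reflR B (gext (gam B β)) t.1 (β t) := by
  rw [gam, reflL_beta_eq_reflR_gam B hB β t.1 (le_of_lt t.2)]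

/-- `β_t = s_{γ_1}⋯s_{γ_{t-1}} γ_t`. -/
lemma beta_eq_reflL_gam (t : Fin n) :
    β t = reflL B (gext (gam B β)) t.1 (gam B β t) := by
  rw [gam_eq_reflR B hB β t, reflL_reflR B hB]

/-- `⟨γ_t, γ_t⟩ = ⟨β_t, β_t⟩`. -/
lemma B_gam_gam (t : Fin n) : B (gam B β t) (gam B β t) = B (β t) (β t) := by
  rw [gam, reflL_B B hB]

end GamLemmas
section Pcoef

open scoped Classical in
/-- Downward-recursive coefficients: `p t = -f t - ∑_{t < t' ≤ k} a t t' * p t'`. -/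
def pcoef {n : ℕ} (a : Fin n → Fin n → ℂ) (f : Fin n → ℂ) (k t : Fin n) : ℂ :=
  -f t - ∑ t' ∈ (Finset.univ.filter fun t' : Fin n => t < t' ∧ t' ≤ k).attach,
    a t t'.1 * pcoef a f k t'.1
termination_by n - t.1
decreasing_by
  have := (Finset.mem_filter.mp t'.2).2.1
  have h1 : t.1 < t'.1 := this
  have h2 : t'.1 < n := t'.1.2
  omega

open scoped Classical in
lemma pcoef_eq {n : ℕ} (a : Fin n → Fin n → ℂ) (f : Fin n → ℂ) (k t : Fin n) :
    pcoef a f k t = -f t - ∑ t' ∈ (Finset.univ.filter fun t' : Fin n => t < t' ∧ t' ≤ k),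
      a t t' * pcoef a f k t' := by
  rw [pcoef, ← Finset.sum_attach (Finset.univ.filter fun t' : Fin n => t < t' ∧ t' ≤ k)
    (fun t' => a t t' * pcoef a f k t')]

end Pcoef
section MoreLemmas

variable {V : Type*} [AddCommGroup V] [Module ℂ V] (B : V →ₗ[ℂ] V →ₗ[ℂ] ℂ)

lemma sRefl_neg (b x : V) : sRefl B b (-x) = -sRefl B b x := by
  have h := sRefl_add B b x (-x)
  simp only [add_neg_cancel, sRefl_zero] at h
  exact (neg_eq_of_add_eq_zero_right h.symm).symm

lemma sRefl_self (b : V) (h : B b b ≠ 0) : sRefl B b b = -b := by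
  rw [sRefl_def, show (2 * B b b / B b b : ℂ) = 2 by field_simp]
  module

lemma reflR_add (g : ℕ → V) (m : ℕ) (x y : V) :
    reflR B g m (x + y) = reflR B g m x + reflR B g m y := by
  induction m with
  | zero => rfl
  | succ m ih => rw [reflR, reflR, reflR, ih, sRefl_add]

lemma reflR_smul (g : ℕ → V) (m : ℕ) (c : ℂ) (x : V) :
    reflR B g m (c • x) = c • reflR B g m x := by
  induction m with
  | zero => rfl
  | succ m ih => rw [reflR, reflR, ih, sRefl_smul]

lemma reflR_zero (g : ℕ → V) (m : ℕ) : reflR B g m 0 = 0 := by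
  induction m with
  | zero => rfl
  | succ m ih => rw [reflR, ih, sRefl_zero]

lemma reflR_sum {ι : Type*} (g : ℕ → V) (m : ℕ) (s : Finset ι) (ξ : ι → V) :
    reflR B g m (∑ i ∈ s, ξ i) = ∑ i ∈ s, reflR B g m (ξ i) := by
  classical
  induction s using Finset.induction with
  | empty => simp [reflR_zero]
  | insert _ _ h ih => rw [Finset.sum_insert h, Finset.sum_insert h, reflR_add, ih]

end MoreLemmas

open scoped Classical in
lemma fiber_sums_eq {n : ℕ} {V : Type*} [AddCommGroup V] [Module ℂ V] (γ : Fin n → V)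
    (hdist : LinearIndependent ℂ (fun v : Set.range γ => (v : V)))
    (x y : Fin n → ℂ) (h : ∑ t, x t • γ t = ∑ t, y t • γ t) (i : Fin n) :
    ∑ t ∈ Finset.univ.filter (fun t => γ t = γ i), x t
      = ∑ t ∈ Finset.univ.filter (fun t => γ t = γ i), y t := by
  set z : Fin n → ℂ := fun t => x t - y t with hz
  have hz0 : ∑ t, z t • γ t = 0 := by
    simp only [hz, sub_smul, Finset.sum_sub_distrib, h, sub_self]
  set r : Fin n → Set.range γ := fun t => ⟨γ t, t, rfl⟩ with hr
  have hgroup : ∑ v : Set.range γ,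
      (∑ t ∈ Finset.univ.filter (fun t => r t = v), z t) • (v : V) = 0 := by
    have := Finset.sum_fiberwise Finset.univ r (fun t => z t • γ t)
    rw [← hz0, ← this]
    refine Finset.sum_congr rfl (fun v _ => ?_)
    rw [Finset.sum_smul]
    refine Finset.sum_congr rfl (fun t ht => ?_)
    have : γ t = (v : V) := by
      have := (Finset.mem_filter.mp ht).2
      rw [← this]
    rw [this]
  have hzero := Fintype.linearIndependent_iff.mp hdist
    (fun v => ∑ t ∈ Finset.univ.filter (fun t => r t = v), z t) hgroup (r i)
  have hfilter : Finset.univ.filter (fun t => r t = r i)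
      = Finset.univ.filter (fun t => γ t = γ i) := by
    refine Finset.filter_congr (fun t _ => ?_)
    simp only [hr, Subtype.ext_iff]
  rw [hfilter] at hzero
  have : ∑ t ∈ Finset.univ.filter (fun t => γ t = γ i), z t
      = (∑ t ∈ Finset.univ.filter (fun t => γ t = γ i), x t)
        - ∑ t ∈ Finset.univ.filter (fun t => γ t = γ i), y t := by
    simp [hz, Finset.sum_sub_distrib]
  rw [this] at hzero
  exact sub_eq_zero.mp hzero

open scoped Classical in
lemma eplus_apply {n : ℕ} {V : Type*} (γ : Fin n → V) (l m : Fin n) :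
    eplus γ l m = if (l < m ∧ γ m = γ l ∧ ∀ t, l < t → t < m → γ t ≠ γ l) then 1 else 0 := by
  have key : ∀ m' : Fin n, m' ∈ plusSet γ l ↔ (l < m' ∧ γ m' = γ l) := fun m' => by
    simp [plusSet]
  by_cases h : (plusSet γ l).Nonempty
  · rw [eplus, dif_pos h]
    have hm₀ := (key _).mp (Finset.min'_mem _ h)
    by_cases hmm : (plusSet γ l).min' h = m
    · rw [if_pos]
      · rw [hmm, Pi.single_eq_same]
      · rw [hmm] at hm₀
        refine ⟨hm₀.1, hm₀.2, fun t hlt htm hγt => ?_⟩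
        have := Finset.min'_le _ t ((key t).mpr ⟨hlt, hγt⟩)
        rw [hmm] at this
        exact absurd htm (not_lt.mpr this)
    · rw [Pi.single_eq_of_ne' hmm, if_neg]
      rintro ⟨h1, h2, h3⟩
      have hle := Finset.min'_le _ m ((key m).mpr ⟨h1, h2⟩)
      have hlt : (plusSet γ l).min' h < m := lt_of_le_of_ne hle hmm
      exact h3 _ hm₀.1 hlt hm₀.2
  · rw [eplus, dif_neg h, if_neg]
    · rfl
    rintro ⟨h1, h2, _⟩
    exact h ⟨m, (key m).mpr ⟨h1, h2⟩⟩
open scoped Classical in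
theorem stmt16 (n : ℕ) (hn : 0 < n) {V : Type*} [AddCommGroup V] [Module ℂ V]
    (B : V →ₗ[ℂ] V →ₗ[ℂ] ℂ) (hBsymm : ∀ x y, B x y = B y x)
    (β : Fin n → V) (hβ : ∀ j, B (β j) (β j) ≠ 0)
    (hdist : LinearIndependent ℂ (fun v : Set.range (gam B β) => (v : V)))
    (j k : Fin n) (hjk : j < k) (f : Fin n → ℂ)
    (hfj : f j = -1) (hfk : f k = -1) (hf0 : ∀ l, l < j ∨ k < l → f l = 0)
    (η : Fin n → V) (hη0 : η j = gam B β j)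
    (hrec : ∀ l m : Fin n, j < l → l < k → (m : ℕ) + 1 = (l : ℕ) →
      η l = sRefl B (gam B β l) (η m) - f l • gam B β l)
    (c : Fin n → Fin n → ℂ)
    (hc : ∀ l, j ≤ l → l < k → η l = ∑ t, c l t • gam B β t)
    (hsum : ∑ l, f l • β l = 0) :
    (∀ l : Fin n, j ≤ l → l < k →
      (∀ l', l < l' → l' ≤ k → gam B β l' ≠ gam B β l) →
      ∑ t ∈ Finset.univ.filter (fun t => gam B β t = gam B β l), c l t = 0) ∧
    f = ∑ l ∈ Finset.univ.filter (fun l => j ≤ l ∧ l < k),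
      (∑ t ∈ Finset.univ.filter (fun t => gam B β t = gam B β l), c l t) •
        thetaC B β l := by
  set γ : Fin n → V := gam B β with hγdef
  set a : Fin n → Fin n → ℂ := fun t t' => cartan B (γ t) (γ t') with hadef
  set p : Fin n → ℂ := pcoef a f k with hpdef
  set G : Fin n → ℂ :=
    fun l => ∑ t ∈ Finset.univ.filter (fun t => (l < t ∧ t ≤ k) ∧ γ t = γ l), p t with hGdef
  have hγn : ∀ t : Fin n, B (γ t) (γ t) ≠ 0 := fun t => by
    rw [hγdef, B_gam_gam B hBsymm β t]; exact hβ t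
  have hacart : ∀ t t' : Fin n, a t t' = 2 * B (γ t) (γ t') / B (γ t) (γ t) := fun _ _ => rfl
  have hsγ : ∀ l t : Fin n, sRefl B (γ l) (γ t) = γ t - a l t • γ l := fun _ _ => rfl
  have hpeq : ∀ t : Fin n, p t = -f t -
      ∑ t' ∈ Finset.univ.filter (fun t' : Fin n => t < t' ∧ t' ≤ k), a t t' * p t' :=
    fun t => pcoef_eq a f k t
  -- step 1 : β j as a combination of the later β's
  have hβj : β j = ∑ l ∈ Finset.univ.filter (fun l : Fin n => j < l ∧ l ≤ k), f l • β l := by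
    have h1 : ∑ l ∈ Finset.univ.filter (fun l : Fin n => j < l ∧ l ≤ k), f l • β l
        + ∑ l ∈ Finset.univ.filter (fun l : Fin n => ¬(j < l ∧ l ≤ k)), f l • β l = 0 := by
      rw [Finset.sum_filter_add_sum_filter_not]; exact hsum
    have h2 : ∑ l ∈ Finset.univ.filter (fun l : Fin n => ¬(j < l ∧ l ≤ k)), f l • β l
        = -β j := by
      rw [Finset.sum_eq_single_of_mem j]
      · rw [hfj, neg_one_smul]
      · simp
      · intro l hl hne
        have hl' := (Finset.mem_filter.mp hl).2
        have : f l = 0 := by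
          apply hf0
          rcases not_and_or.mp hl' with h | h
          · left
            rcases lt_or_eq_of_le (not_lt.mp h) with h' | h'
            · exact h'
            · exact absurd h' hne
          · right; exact not_le.mp h
        rw [this, zero_smul]
    rw [h2] at h1
    exact (add_neg_eq_zero.mp h1).symm
  -- step 2 : apply the reflection word to both sides
  have hrefl : -γ j = ∑ l ∈ Finset.univ.filter (fun l : Fin n => j < l ∧ l ≤ k),
      f l • reflL B (fun i => gext γ (i + (j.1+1))) (l.1 - (j.1+1)) (γ l) := by
    have hwβj : reflR B (gext γ) (j.1+1) (β j) = -γ j := by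
      have h1 : reflR B (gext γ) j.1 (β j) = γ j := by
        rw [hγdef]; exact (gam_eq_reflR B hBsymm β j).symm
      rw [reflR, h1]
      have h2 : gext γ j.1 = γ j := by
        simp only [gext, dif_pos j.2, Fin.eta]
      rw [h2]
      exact sRefl_self B (γ j) (hγn j)
    have happ := congrArg (reflR B (gext γ) (j.1+1)) hβj
    rw [hwβj, reflR_sum] at happ
    rw [happ]
    refine Finset.sum_congr rfl (fun l hl => ?_)
    have hjl : j.1 < l.1 := Fin.lt_def.mp ((Finset.mem_filter.mp hl).2).1
    rw [reflR_smul]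
    congr 1
    have hβl : β l = reflL B (gext γ) l.1 (γ l) := by
      rw [hγdef]; exact beta_eq_reflL_gam B hBsymm β l
    rw [hβl, reflR_reflL_shift B hBsymm (gext γ) (j.1+1) l.1 (by omega) (γ l)]
  -- step 3 : bookkeeping of the reflection expansion (downward induction)
  have hD : ∀ d : ℕ, ∀ l : Fin n, l.1 + d = k.1 →
      ∑ t ∈ Finset.univ.filter (fun t : Fin n => l < t ∧ t ≤ k),
        f t • reflL B (fun i => gext γ (i + (l.1+1))) (t.1 - (l.1+1)) (γ t)
      = -∑ t ∈ Finset.univ.filter (fun t : Fin n => l < t ∧ t ≤ k), p t • γ t := by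
    intro d
    induction d with
    | zero =>
        intro l hl
        have he : Finset.univ.filter (fun t : Fin n => l < t ∧ t ≤ k) = ∅ := by
          apply Finset.filter_eq_empty_iff.mpr
          intro t _
          rintro ⟨h1, h2⟩
          have h1' := Fin.lt_def.mp h1
          have h2' := Fin.le_def.mp h2
          omega
        rw [he, Finset.sum_empty, Finset.sum_empty, neg_zero]
    | succ d ih =>
        intro l hl
        have hl1n : l.1 + 1 < n := by have := k.2; omega
        set l' : Fin n := ⟨l.1 + 1, hl1n⟩ with hl'def
        have hins : Finset.univ.filter (fun t : Fin n => l < t ∧ t ≤ k)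
            = insert l' (Finset.univ.filter (fun t : Fin n => l' < t ∧ t ≤ k)) := by
          ext t
          simp only [Finset.mem_insert, Finset.mem_filter, Finset.mem_univ, true_and,
            Fin.lt_def, Fin.le_def, Fin.ext_iff, hl'def]
          omega
        have hnm : l' ∉ Finset.univ.filter (fun t : Fin n => l' < t ∧ t ≤ k) := by
          simp
        rw [hins, Finset.sum_insert hnm, Finset.sum_insert hnm]
        have h00 : l'.1 - (l.1 + 1) = 0 := by simp [hl'def]
        rw [h00]
        have hid : reflL B (fun i => gext γ (i + (l.1+1))) 0 (γ l') = γ l' := rfl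
        rw [hid]
        have hpeel : ∑ t ∈ Finset.univ.filter (fun t : Fin n => l' < t ∧ t ≤ k),
            f t • reflL B (fun i => gext γ (i + (l.1+1))) (t.1 - (l.1+1)) (γ t)
          = sRefl B (γ l') (∑ t ∈ Finset.univ.filter (fun t : Fin n => l' < t ∧ t ≤ k),
              f t • reflL B (fun i => gext γ (i + (l'.1+1))) (t.1 - (l'.1+1)) (γ t)) := by
          rw [sRefl_sum]
          refine Finset.sum_congr rfl (fun t ht => ?_)
          rw [sRefl_smul]
          congr 1
          have hl't : l'.1 < t.1 := Fin.lt_def.mp ((Finset.mem_filter.mp ht).2).1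
          have hl't' : l.1 + 1 < t.1 := by
            simpa only [hl'def] using hl't
          obtain ⟨e, he⟩ : ∃ e, t.1 - (l.1+1) = e + 1 := ⟨t.1 - (l.1+2), by omega⟩
          rw [he, reflL_peel]
          have hg0 : gext γ (0 + (l.1+1)) = γ l' := by
            rw [Nat.zero_add]
            simp only [gext, dif_pos hl1n]
            rfl
          rw [hg0]
          congr 1
          have hlen : t.1 - (l'.1+1) = e := by
            simp only [hl'def]; omega
          rw [hlen]
          exact reflL_congr B _ _ e
            (fun i _ => by show gext γ (i+1+(l.1+1)) = gext γ (i+(l'.1+1)); congr 1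
                           simp only [hl'def]; omega) (γ t)
        rw [hpeel, ih l' (by simp only [hl'def]; omega), sRefl_neg, sRefl_sum]
        have hterm : ∀ t : Fin n, sRefl B (γ l') (p t • γ t)
            = p t • γ t - (a l' t * p t) • γ l' := by
          intro t
          rw [sRefl_smul, hsγ, smul_sub, smul_smul, mul_comm]
        rw [Finset.sum_congr rfl (fun t _ => hterm t), Finset.sum_sub_distrib,
          ← Finset.sum_smul]
        have hcoef : f l' + ∑ t ∈ Finset.univ.filter (fun t : Fin n => l' < t ∧ t ≤ k),
            a l' t * p t = -p l' := by
          rw [hpeq l']; ring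
        calc f l' • γ l' + -(∑ t ∈ Finset.univ.filter (fun t : Fin n => l' < t ∧ t ≤ k),
                p t • γ t - (∑ t ∈ Finset.univ.filter (fun t : Fin n => l' < t ∧ t ≤ k),
                a l' t * p t) • γ l')
            = (f l' + ∑ t ∈ Finset.univ.filter (fun t : Fin n => l' < t ∧ t ≤ k),
                a l' t * p t) • γ l'
              - ∑ t ∈ Finset.univ.filter (fun t : Fin n => l' < t ∧ t ≤ k), p t • γ t := by
              rw [add_smul]; abel
          _ = -(p l' • γ l' + ∑ t ∈ Finset.univ.filter (fun t : Fin n => l' < t ∧ t ≤ k),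
                p t • γ t) := by
              rw [hcoef, neg_smul]; abel
  -- the key identity ★
  have hstar : γ j = ∑ t ∈ Finset.univ.filter (fun t : Fin n => j < t ∧ t ≤ k), p t • γ t := by
    have h1 := hD (k.1 - j.1) j (by omega)
    rw [h1] at hrefl
    exact neg_injective hrefl
  -- fiberwise consequence ★★
  have hst2 : ∀ i : Fin n,
      ∑ t ∈ Finset.univ.filter (fun t : Fin n => (j < t ∧ t ≤ k) ∧ γ t = γ i), p t
        = if γ j = γ i then 1 else 0 := by
    intro i
    have hx : ∑ t, (if t = j then (1:ℂ) else 0) • γ t = γ j := by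
      simp only [ite_smul, zero_smul, one_smul]
      rw [Finset.sum_ite_eq' Finset.univ j (fun t => γ t)]
      simp
    have hy : ∑ t, (if j < t ∧ t ≤ k then p t else 0) • γ t
        = ∑ t ∈ Finset.univ.filter (fun t : Fin n => j < t ∧ t ≤ k), p t • γ t := by
      rw [Finset.sum_filter]
      simp only [ite_smul, zero_smul]
    have hfib := fiber_sums_eq γ hdist (fun t => if t = j then (1:ℂ) else 0)
      (fun t => if j < t ∧ t ≤ k then p t else 0) (by rw [hx, hy, ← hstar]) i
    have h1 : ∑ t ∈ Finset.univ.filter (fun t => γ t = γ i), (if t = j then (1:ℂ) else 0)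
        = if γ j = γ i then 1 else 0 := by
      rw [Finset.sum_ite_eq' (Finset.univ.filter (fun t => γ t = γ i)) j (fun _ => (1:ℂ))]
      simp
    have h2 : ∑ t ∈ Finset.univ.filter (fun t => γ t = γ i),
        (if j < t ∧ t ≤ k then p t else 0)
        = ∑ t ∈ Finset.univ.filter (fun t : Fin n => (j < t ∧ t ≤ k) ∧ γ t = γ i), p t := by
      rw [← Finset.sum_filter, Finset.filter_filter]
      apply Finset.sum_congr _ (fun _ _ => rfl)
      apply Finset.filter_congr
      intro t _
      tauto
    rw [← h2, ← hfib, h1]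
  -- the η's expanded (upward induction)
  have hC : ∀ l : Fin n, j ≤ l → l < k →
      η l = ∑ t ∈ Finset.univ.filter (fun t : Fin n => l < t ∧ t ≤ k), p t • γ t := by
    have key : ∀ d : ℕ, ∀ l : Fin n, l.1 = j.1 + d → l < k →
        η l = ∑ t ∈ Finset.univ.filter (fun t : Fin n => l < t ∧ t ≤ k), p t • γ t := by
      intro d
      induction d with
      | zero =>
          intro l hl hlk
          have hlj : l = j := Fin.ext (by omega)
          subst hlj
          rw [hη0]
          exact hstar
      | succ d ih =>
          intro l hl hlk
          have hmn : j.1 + d < n := by have := l.2; omega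
          set m : Fin n := ⟨j.1 + d, hmn⟩ with hmdef
          have hml : m.1 + 1 = l.1 := by simp only [hmdef]; omega
          have hjl : j < l := by rw [Fin.lt_def]; omega
          have hmk : m < k := by
            rw [Fin.lt_def]
            have := Fin.lt_def.mp hlk
            simp only [hmdef]
            omega
          have hηl := hrec l m hjl hlk hml
          have hηm := ih m (by simp only [hmdef]) hmk
          rw [hηl, hηm]
          have hlk' : l.1 ≤ k.1 := le_of_lt (Fin.lt_def.mp hlk)
          have hins : Finset.univ.filter (fun t : Fin n => m < t ∧ t ≤ k)
              = insert l (Finset.univ.filter (fun t : Fin n => l < t ∧ t ≤ k)) := by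
            ext t
            simp only [Finset.mem_insert, Finset.mem_filter, Finset.mem_univ, true_and,
              Fin.lt_def, Fin.le_def, Fin.ext_iff, hmdef]
            omega
          rw [hins, Finset.sum_insert (by simp)]
          rw [sRefl_add, sRefl_smul, sRefl_self B (γ l) (hγn l), sRefl_sum]
          have hterm : ∀ t : Fin n, sRefl B (γ l) (p t • γ t)
              = p t • γ t - (a l t * p t) • γ l := fun t => by
            rw [sRefl_smul, hsγ, smul_sub, smul_smul, mul_comm]
          rw [Finset.sum_congr rfl (fun t _ => hterm t), Finset.sum_sub_distrib,
            ← Finset.sum_smul]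
          have hcoef : f l + ∑ t ∈ Finset.univ.filter (fun t : Fin n => l < t ∧ t ≤ k),
              a l t * p t = -p l := by
            rw [hpeq l]; ring
          have hz : p l + (f l + ∑ t ∈ Finset.univ.filter (fun t : Fin n => l < t ∧ t ≤ k),
              a l t * p t) = 0 := by rw [hcoef]; ring
          calc p l • -γ l + (∑ t ∈ Finset.univ.filter (fun t : Fin n => l < t ∧ t ≤ k),
                  p t • γ t
                - (∑ t ∈ Finset.univ.filter (fun t : Fin n => l < t ∧ t ≤ k),
                  a l t * p t) • γ l) - f l • γ l
              = ∑ t ∈ Finset.univ.filter (fun t : Fin n => l < t ∧ t ≤ k), p t • γ t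
                - (p l + (f l + ∑ t ∈ Finset.univ.filter (fun t : Fin n => l < t ∧ t ≤ k),
                  a l t * p t)) • γ l := by
                rw [add_smul, add_smul, smul_neg]; abel
            _ = ∑ t ∈ Finset.univ.filter (fun t : Fin n => l < t ∧ t ≤ k), p t • γ t := by
                rw [hz, zero_smul, sub_zero]
    intro l h1 h2
    exact key (l.1 - j.1) l (by have := Fin.le_def.mp h1; omega) h2
  -- coefficient sums of c equal G
  have hG : ∀ l : Fin n, j ≤ l → l < k →
      ∑ t ∈ Finset.univ.filter (fun t => γ t = γ l), c l t = G l := by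
    intro l h1 h2
    have hy : ∑ t, (if l < t ∧ t ≤ k then p t else 0) • γ t
        = ∑ t ∈ Finset.univ.filter (fun t : Fin n => l < t ∧ t ≤ k), p t • γ t := by
      rw [Finset.sum_filter]
      simp only [ite_smul, zero_smul]
    have hxy : ∑ t, c l t • γ t = ∑ t, (if l < t ∧ t ≤ k then p t else 0) • γ t := by
      rw [← hc l h1 h2, hy]
      exact hC l h1 h2
    have hfib := fiber_sums_eq γ hdist (c l)
      (fun t => if l < t ∧ t ≤ k then p t else 0) hxy l
    rw [hfib]
    rw [← Finset.sum_filter, Finset.filter_filter]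
    simp only [hGdef]
    apply Finset.sum_congr _ (fun _ _ => rfl)
    apply Finset.filter_congr
    intro t _
    tauto
  constructor
  · -- part (A)
    intro l h1 h2 h3
    rw [hG l h1 h2]
    simp only [hGdef]
    rw [Finset.filter_eq_empty_iff.mpr, Finset.sum_empty]
    rintro t - ⟨⟨ht1, ht2⟩, ht3⟩
    exact h3 t ht1 ht2 ht3
  · -- part (B)
    have hGk : G k = 0 := by
      simp only [hGdef]
      rw [Finset.filter_eq_empty_iff.mpr, Finset.sum_empty]
      rintro t - ⟨⟨ht1, ht2⟩, -⟩
      exact absurd ht2 (not_le.mpr ht1)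
    set S := Finset.univ.filter (fun l : Fin n => j ≤ l ∧ l < k) with hSdef
    set v : Fin n → ℂ := fun m => if m = j then 1 else if j < m ∧ m ≤ k then -p m else 0
      with hvdef
    have hQ : ∀ i m : Fin n, Qmat B γ i m
        = if i = m then 1 else if i < m then a i m else 0 := fun _ _ => rfl
    -- the inner vector
    have hvsum : ∑ l ∈ S, G l • ((Pi.single l 1 : Fin n → ℂ) - eplus γ l) = v := by
      funext m
      rw [Finset.sum_apply]
      simp only [Pi.sub_apply, Pi.smul_apply, smul_eq_mul, Pi.single_apply, eplus_apply,
        mul_sub, mul_ite, mul_one, mul_zero]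
      rw [Finset.sum_sub_distrib, Finset.sum_ite_eq S m G, ← Finset.sum_filter]
      have hmemS : ∀ l : Fin n, l ∈ S ↔ (j ≤ l ∧ l < k) := by
        intro l; rw [hSdef, Finset.mem_filter]; simp
      have hvj : v j = 1 := by simp [hvdef]
      rcases lt_trichotomy m j with hmj | hmj | hjm
      · -- m < j
        have hvm : v m = 0 := by
          have h1 : m ≠ j := ne_of_lt hmj
          have h2 : ¬(j < m ∧ m ≤ k) := fun h => absurd h.1 (not_lt.mpr (le_of_lt hmj))
          simp only [hvdef]
          rw [if_neg h1, if_neg h2]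
        have hmS : m ∉ S := fun h => absurd ((hmemS m).mp h).1 (not_le.mpr hmj)
        rw [hvm, if_neg hmS]
        rw [Finset.filter_eq_empty_iff.mpr, Finset.sum_empty]
        · ring
        · rintro l hl ⟨hp1, -, -⟩
          exact absurd (lt_of_lt_of_le hmj ((hmemS l).mp hl).1) (not_lt.mpr (le_of_lt hp1))
      · -- m = j
        rw [hmj, hvj]
        have hjS : j ∈ S := (hmemS j).mpr ⟨le_refl j, hjk⟩
        rw [if_pos hjS]
        rw [Finset.filter_eq_empty_iff.mpr, Finset.sum_empty]
        · have hGj : G j = 1 := by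
            have h2 := hst2 j
            rw [if_pos rfl] at h2
            simp only [hGdef]
            exact h2
          rw [hGj]; ring
        · rintro l hl ⟨hp1, -, -⟩
          exact absurd (lt_of_le_of_lt ((hmemS l).mp hl).1 hp1) (lt_irrefl j)
      · -- j < m
        have hmnej : m ≠ j := ne_of_gt hjm
        by_cases hmk : m ≤ k
        · -- j < m ≤ k
          have hvm : v m = -p m := by
            have h2 : j < m ∧ m ≤ k := ⟨hjm, hmk⟩
            simp only [hvdef]
            rw [if_neg hmnej, if_pos h2]
          rw [hvm]
          have hfirst : (if m ∈ S then G m else 0) = G m := by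
            by_cases hmk' : m < k
            · have hmS : m ∈ S := (hmemS m).mpr ⟨le_of_lt hjm, hmk'⟩
              rw [if_pos hmS]
            · have hmkeq : m = k := le_antisymm hmk (not_lt.mp hmk')
              have hmS : m ∉ S := fun h => absurd ((hmemS m).mp h).2 hmk'
              rw [if_neg hmS, hmkeq, hGk]
          rw [hfirst]
          have hGsplit : ∀ l₀ : Fin n,
              (l₀ < m ∧ γ m = γ l₀ ∧ ∀ t, l₀ < t → t < m → γ t ≠ γ l₀) →
              G l₀ = p m + G m := by
            rintro l₀ ⟨hp1, hp2, hp3⟩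
            have hins2 : Finset.univ.filter (fun t : Fin n => (l₀ < t ∧ t ≤ k) ∧ γ t = γ l₀)
                = insert m (Finset.univ.filter
                    (fun t : Fin n => (m < t ∧ t ≤ k) ∧ γ t = γ m)) := by
              ext t
              simp only [Finset.mem_insert, Finset.mem_filter, Finset.mem_univ, true_and]
              constructor
              · rintro ⟨⟨ht1, ht2⟩, ht3⟩
                rcases lt_trichotomy t m with h | h | h
                · exact absurd ht3 (hp3 t ht1 h)
                · left; exact h
                · right; exact ⟨⟨h, ht2⟩, ht3.trans hp2.symm⟩
              · rintro (rfl | ⟨⟨ht1, ht2⟩, ht3⟩)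
                · exact ⟨⟨hp1, hmk⟩, hp2⟩
                · exact ⟨⟨lt_trans hp1 ht1, ht2⟩, ht3.trans hp2⟩
            simp only [hGdef]
            rw [hins2, Finset.sum_insert (by simp)]
          by_cases hT : (S.filter (fun l : Fin n =>
              l < m ∧ γ m = γ l ∧ ∀ t, l < t → t < m → γ t ≠ γ l)).Nonempty
          · obtain ⟨l₀, hl₀⟩ := hT
            have huniq : S.filter (fun l : Fin n =>
                l < m ∧ γ m = γ l ∧ ∀ t, l < t → t < m → γ t ≠ γ l) = {l₀} := by
              apply Finset.eq_singleton_iff_unique_mem.mpr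
              refine ⟨hl₀, fun l hl => ?_⟩
              have h₀ := (Finset.mem_filter.mp hl₀).2
              have h₁ := (Finset.mem_filter.mp hl).2
              by_contra hne
              rcases lt_or_gt_of_ne hne with h | h
              · exact (h₁.2.2 l₀ h h₀.1) (h₀.2.1.symm.trans h₁.2.1)
              · exact (h₀.2.2 l h h₁.1) (h₁.2.1.symm.trans h₀.2.1)
            rw [huniq, Finset.sum_singleton,
              hGsplit l₀ (Finset.mem_filter.mp hl₀).2]
            ring
          · rw [Finset.not_nonempty_iff_eq_empty.mp hT, Finset.sum_empty, sub_zero]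
            have hno : ∀ l, j ≤ l → l < m → γ l ≠ γ m := by
              intro l hl1 hl2
              by_contra hl3
              have hne : (Finset.univ.filter
                  (fun l : Fin n => (j ≤ l ∧ l < m) ∧ γ l = γ m)).Nonempty := by
                refine ⟨l, ?_⟩
                simp only [Finset.mem_filter, Finset.mem_univ, true_and]
                exact ⟨⟨hl1, hl2⟩, hl3⟩
              set l₀ := (Finset.univ.filter
                  (fun l : Fin n => (j ≤ l ∧ l < m) ∧ γ l = γ m)).max' hne with hl₀def
              have hl₀mem := Finset.max'_mem _ hne
              rw [← hl₀def] at hl₀mem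
              simp only [Finset.mem_filter, Finset.mem_univ, true_and] at hl₀mem
              have hP : l₀ < m ∧ γ m = γ l₀ ∧ ∀ t, l₀ < t → t < m → γ t ≠ γ l₀ := by
                refine ⟨hl₀mem.1.2, hl₀mem.2.symm, fun t ht1 ht2 hta => ?_⟩
                have htmem : t ∈ Finset.univ.filter
                    (fun l : Fin n => (j ≤ l ∧ l < m) ∧ γ l = γ m) := by
                  simp only [Finset.mem_filter, Finset.mem_univ, true_and]
                  exact ⟨⟨le_of_lt (lt_of_le_of_lt hl₀mem.1.1 ht1), ht2⟩,
                    hta.trans hl₀mem.2⟩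
                have := Finset.le_max' _ t htmem
                rw [← hl₀def] at this
                exact absurd ht1 (not_lt.mpr this)
              have hl₀S : l₀ ∈ S.filter (fun l : Fin n =>
                  l < m ∧ γ m = γ l ∧ ∀ t, l < t → t < m → γ t ≠ γ l) := by
                rw [Finset.mem_filter]
                exact ⟨(hmemS l₀).mpr ⟨hl₀mem.1.1, lt_of_lt_of_le hl₀mem.1.2 hmk⟩, hP⟩
              rw [Finset.not_nonempty_iff_eq_empty.mp hT] at hl₀S
              exact absurd hl₀S (Finset.notMem_empty l₀)
            have hins3 : Finset.univ.filter (fun t : Fin n => (j < t ∧ t ≤ k) ∧ γ t = γ m)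
                = insert m (Finset.univ.filter
                    (fun t : Fin n => (m < t ∧ t ≤ k) ∧ γ t = γ m)) := by
              ext t
              simp only [Finset.mem_insert, Finset.mem_filter, Finset.mem_univ, true_and]
              constructor
              · rintro ⟨⟨ht1, ht2⟩, ht3⟩
                rcases lt_trichotomy t m with h | h | h
                · exact absurd ht3 (hno t (le_of_lt ht1) h)
                · left; exact h
                · right; exact ⟨⟨h, ht2⟩, ht3⟩
              · rintro (rfl | ⟨⟨ht1, ht2⟩, ht3⟩)
                · exact ⟨⟨hjm, hmk⟩, rfl⟩
                · exact ⟨⟨lt_trans hjm ht1, ht2⟩, ht3⟩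
            have h2 := hst2 m
            rw [hins3, Finset.sum_insert (by simp),
              if_neg (hno j (le_refl j) hjm)] at h2
            simp only [hGdef]
            linear_combination h2
        · -- k < m
          have hkm : k < m := not_le.mp hmk
          have hvm : v m = 0 := by
            have h2 : ¬(j < m ∧ m ≤ k) := fun h => absurd h.2 hmk
            simp only [hvdef]
            rw [if_neg hmnej, if_neg h2]
          rw [hvm]
          have hmS : m ∉ S := fun h =>
            absurd ((hmemS m).mp h).2 (not_lt.mpr (le_of_lt hkm))
          rw [if_neg hmS]
          rw [Finset.sum_eq_zero, sub_zero]
          intro l hl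
          obtain ⟨hlS, hP⟩ := Finset.mem_filter.mp hl
          simp only [hGdef]
          rw [Finset.filter_eq_empty_iff.mpr, Finset.sum_empty]
          rintro t - ⟨⟨ht1, ht2⟩, ht3⟩
          exact hP.2.2 t ht1 (lt_of_le_of_lt ht2 hkm) ht3
    -- the matrix identity
    have hQv : (Qmat B γ).mulVec v = f := by
      funext i
      have hQdiag : ∀ i2 : Fin n, Qmat B γ i2 i2 = 1 := fun i2 => by
        rw [hQ, if_pos rfl]
      have hQlt : ∀ i2 m2 : Fin n, i2 < m2 → Qmat B γ i2 m2 = a i2 m2 := fun i2 m2 h => by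
        rw [hQ, if_neg (ne_of_lt h), if_pos h]
      have hQgt : ∀ i2 m2 : Fin n, m2 < i2 → Qmat B γ i2 m2 = 0 := fun i2 m2 h => by
        rw [hQ, if_neg (ne_of_gt h), if_neg (not_lt.mpr (le_of_lt h))]
      have hpair : ∀ i2 : Fin n, B (γ i2) (γ j)
          = ∑ m2 ∈ Finset.univ.filter (fun m2 : Fin n => j < m2 ∧ m2 ≤ k),
            p m2 * B (γ i2) (γ m2) := by
        intro i2
        have h := congrArg (B (γ i2)) hstar
        rw [map_sum] at h
        simp only [_root_.map_smul, smul_eq_mul] at h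
        exact h
      have hasum : ∀ i2 : Fin n,
          ∑ m2 ∈ Finset.univ.filter (fun m2 : Fin n => j < m2 ∧ m2 ≤ k), a i2 m2 * p m2
          = 2 * B (γ i2) (γ j) / B (γ i2) (γ i2) := by
        intro i2
        rw [hpair i2, Finset.mul_sum, Finset.sum_div]
        refine Finset.sum_congr rfl (fun m2 _ => ?_)
        rw [hacart]
        ring
      have hdot : (Qmat B γ).mulVec v i = ∑ m2 : Fin n, Qmat B γ i m2 * v m2 := rfl
      rw [hdot]
      have hjF : j ∉ Finset.univ.filter (fun m2 : Fin n => j < m2 ∧ m2 ≤ k) := by simp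
      have hsplit : ∑ m2 : Fin n, Qmat B γ i m2 * v m2
          = Qmat B γ i j * 1 + ∑ m2 ∈ Finset.univ.filter (fun m2 : Fin n => j < m2 ∧ m2 ≤ k),
            Qmat B γ i m2 * (-p m2) := by
        rw [← Finset.sum_subset (Finset.subset_univ
          (insert j (Finset.univ.filter (fun m2 : Fin n => j < m2 ∧ m2 ≤ k))))]
        · rw [Finset.sum_insert hjF]
          congr 1
          · congr 1
            simp [hvdef]
          · refine Finset.sum_congr rfl (fun m2 hm2 => ?_)
            congr 1
            have h := (Finset.mem_filter.mp hm2).2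
            simp only [hvdef]
            rw [if_neg (ne_of_gt h.1), if_pos h]
        · intro m2 _ hm2
          rw [Finset.mem_insert] at hm2
          have hv0 : v m2 = 0 := by
            simp only [hvdef]
            rw [if_neg (fun h => hm2 (Or.inl h)), if_neg (fun h => hm2 (Or.inr (by
              simp only [Finset.mem_filter, Finset.mem_univ, true_and]; exact h)))]
          rw [hv0, mul_zero]
      rw [hsplit]
      rcases lt_trichotomy i j with hij | hij | hij
      · -- i < j
        rw [hf0 i (Or.inl hij), hQlt i j hij]
        have hneg : ∑ m2 ∈ Finset.univ.filter (fun m2 : Fin n => j < m2 ∧ m2 ≤ k),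
            Qmat B γ i m2 * (-p m2)
            = -∑ m2 ∈ Finset.univ.filter (fun m2 : Fin n => j < m2 ∧ m2 ≤ k),
              a i m2 * p m2 := by
          rw [← Finset.sum_neg_distrib]
          refine Finset.sum_congr rfl (fun m2 hm2 => ?_)
          have h := (Finset.mem_filter.mp hm2).2
          rw [hQlt i m2 (lt_trans hij h.1)]
          ring
        rw [hneg, hasum i, ← hacart i j]
        ring
      · -- i = j
        rw [hij, hfj, hQdiag j]
        have hneg : ∑ m2 ∈ Finset.univ.filter (fun m2 : Fin n => j < m2 ∧ m2 ≤ k),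
            Qmat B γ j m2 * (-p m2)
            = -∑ m2 ∈ Finset.univ.filter (fun m2 : Fin n => j < m2 ∧ m2 ≤ k),
              a j m2 * p m2 := by
          rw [← Finset.sum_neg_distrib]
          refine Finset.sum_congr rfl (fun m2 hm2 => ?_)
          have h := (Finset.mem_filter.mp hm2).2
          rw [hQlt j m2 h.1]
          ring
        rw [hneg, hasum j, mul_div_assoc, div_self (hγn j), mul_one]
        norm_num
      · -- j < i
        by_cases hik : i ≤ k
        · have hiF : i ∈ Finset.univ.filter (fun m2 : Fin n => j < m2 ∧ m2 ≤ k) := by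
            simp only [Finset.mem_filter, Finset.mem_univ, true_and]
            exact ⟨hij, hik⟩
          rw [hQgt i j hij]
          have hsub : insert i (Finset.univ.filter (fun m2 : Fin n => i < m2 ∧ m2 ≤ k))
              ⊆ Finset.univ.filter (fun m2 : Fin n => j < m2 ∧ m2 ≤ k) := by
            intro x hx
            rcases Finset.mem_insert.mp hx with rfl | hx
            · exact hiF
            · have h := (Finset.mem_filter.mp hx).2
              simp only [Finset.mem_filter, Finset.mem_univ, true_and]
              exact ⟨lt_trans hij h.1, h.2⟩
          have hzero : ∀ x ∈ Finset.univ.filter (fun m2 : Fin n => j < m2 ∧ m2 ≤ k),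
              x ∉ insert i (Finset.univ.filter (fun m2 : Fin n => i < m2 ∧ m2 ≤ k)) →
              Qmat B γ i x * (-p x) = 0 := by
            intro x hxF hxn
            have hxk := (Finset.mem_filter.mp hxF).2.2
            have hxi : x < i := by
              by_contra hxi2
              push_neg at hxi2
              rcases lt_or_eq_of_le hxi2 with h | h
              · refine hxn (Finset.mem_insert.mpr (Or.inr ?_))
                simp only [Finset.mem_filter, Finset.mem_univ, true_and]
                exact ⟨h, hxk⟩
              · exact hxn (Finset.mem_insert.mpr (Or.inl h.symm))
            rw [hQgt i x hxi, zero_mul]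
          rw [← Finset.sum_subset hsub hzero,
            Finset.sum_insert (by simp), hQdiag i]
          have hneg : ∑ m2 ∈ Finset.univ.filter (fun m2 : Fin n => i < m2 ∧ m2 ≤ k),
              Qmat B γ i m2 * (-p m2)
              = -∑ m2 ∈ Finset.univ.filter (fun m2 : Fin n => i < m2 ∧ m2 ≤ k),
                a i m2 * p m2 := by
            rw [← Finset.sum_neg_distrib]
            refine Finset.sum_congr rfl (fun m2 hm2 => ?_)
            have h := (Finset.mem_filter.mp hm2).2
            rw [hQlt i m2 h.1]
            ring
          rw [hneg]
          have hp := hpeq i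
          linear_combination -hp
        · -- k < i
          have hki : k < i := not_le.mp hik
          rw [hf0 i (Or.inr hki), hQgt i j (lt_trans hjk hki)]
          rw [Finset.sum_eq_zero]
          · ring
          intro m2 hm2
          have h := (Finset.mem_filter.mp hm2).2
          rw [hQgt i m2 (lt_of_le_of_lt h.2 hki), zero_mul]
    -- assemble
    have hrw : ∀ l ∈ S, (∑ t ∈ Finset.univ.filter (fun t => γ t = γ l), c l t) • thetaC B β l
        = G l • ((Qmat B γ).mulVecLin ((Pi.single l 1 : Fin n → ℂ) - eplus γ l)) := by
      intro l hl
      have h := (Finset.mem_filter.mp hl).2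
      rw [hG l h.1 h.2, thetaC, ← hγdef, Matrix.mulVecLin_apply]
    rw [Finset.sum_congr rfl hrw]
    have hlin : ∑ l ∈ S, G l • ((Qmat B γ).mulVecLin
        ((Pi.single l 1 : Fin n → ℂ) - eplus γ l))
        = (Qmat B γ).mulVecLin (∑ l ∈ S, G l • ((Pi.single l 1 : Fin n → ℂ) - eplus γ l)) := by
      rw [map_sum]
      exact Finset.sum_congr rfl (fun l _ => (_root_.map_smul _ _ _).symm)
    rw [hlin, hvsum, Matrix.mulVecLin_apply, hQv]
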